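/- Let σ > 0, H > 0, B > 0, let m ≥ 1 be an integer, let τ ∈ (0, 1), and let c₁, …, c_m be real numbers such that for every j, either c_j = 0 or c_j ≥ B. Let ξ₁, …, ξ_m be independent real random variables each with law gaussianReal 0 (σ²). If H ≥ σ·√(2·log(2m/τ)) and B − H ≥ σ·√(2·log(2m/τ)), then with probability at least 1 − τ the following holds simultaneously for every j ∈ {1,…,m}: c_j + ξ_j > H if and only if c_j ≥ B. -/

import Mathlib

open MeasureTheory ProbabilityTheory
open scoped ENNReal NNReal

section Aux
open Real Set

lemma gauss_tail_Ioi (v : ℝ≥0) (hv : 0 < (v : ℝ)) (t : ℝ) (ht : Real.sqrt v ≤ t) :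
    gaussianReal 0 v (Set.Ioi t) ≤ ENNReal.ofReal (Real.exp (-t ^ 2 / (2 * v))) := by
  have hv0 : v ≠ 0 := by
    intro h
    rw [h] at hv; simp at hv
  have htpos : 0 < t := lt_of_lt_of_le (Real.sqrt_pos.mpr hv) ht
  set a : ℝ := t / v with ha
  have hapos : 0 < a := div_pos htpos hv
  set C : ℝ := (Real.sqrt (2 * π * v))⁻¹ * Real.exp (t ^ 2 / (2 * v)) with hC
  have hsqrtpos : 0 < Real.sqrt (2 * π * v) := Real.sqrt_pos.mpr (by positivity)
  have hCpos : 0 < C := by positivity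
  rw [gaussianReal_apply_eq_integral 0 hv0]
  apply ENNReal.ofReal_le_ofReal
  have h1 : ∫ x in Ioi t, gaussianPDFReal 0 v x ≤ ∫ x in Ioi t, C * Real.exp (-a * x) := by
    refine setIntegral_mono_on (integrable_gaussianPDFReal 0 v).integrableOn
      ((exp_neg_integrableOn_Ioi t hapos).const_mul C) measurableSet_Ioi ?_
    intro x _
    simp only [gaussianPDFReal, hC, mul_assoc]
    refine mul_le_mul_of_nonneg_left ?_ (by positivity)
    rw [← Real.exp_add, Real.exp_le_exp]
    have hkey : t ^ 2 / (2 * v) + -a * x - (-(x - 0) ^ 2 / (2 * v)) = (x - t) ^ 2 / (2 * v) := by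
      rw [ha]; field_simp; ring
    nlinarith [div_nonneg (sq_nonneg (x - t)) (by positivity : (0:ℝ) ≤ 2 * v)]
  have h2 : ∫ x in Ioi t, C * Real.exp (-a * x) = C * (a⁻¹ * Real.exp (-(a * t))) := by
    simp_rw [show ∀ x:ℝ, -a*x = -(a*x) from fun x => neg_mul a x]
    rw [MeasureTheory.integral_const_mul,
      MeasureTheory.integral_comp_mul_left_Ioi (fun x => Real.exp (-x)) t hapos,
      integral_exp_neg_Ioi, smul_eq_mul]
  refine h1.trans (h2.trans_le ?_)
  have hainv : a⁻¹ = v / t := by rw [ha]; field_simp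
  have hat : a * t = t ^ 2 / v := by rw [ha]; field_simp
  have hexp : Real.exp (t ^ 2 / (2 * v)) * Real.exp (-(t ^ 2 / v)) = Real.exp (-t ^ 2 / (2 * v)) := by
    rw [← Real.exp_add]; congr 1; field_simp; ring
  have hco : (Real.sqrt (2 * π * v))⁻¹ * (v / t) ≤ 1 := by
    rw [inv_mul_le_iff₀ hsqrtpos, mul_one]
    have h1 : (v : ℝ) / t ≤ (v : ℝ) / Real.sqrt v :=
      div_le_div_of_nonneg_left hv.le (Real.sqrt_pos.mpr hv) ht
    rw [Real.div_sqrt] at h1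
    refine h1.trans (Real.sqrt_le_sqrt ?_)
    nlinarith [Real.pi_gt_three, hv]
  calc C * (a⁻¹ * Real.exp (-(a * t)))
      = ((Real.sqrt (2 * π * v))⁻¹ * (v / t)) *
        (Real.exp (t ^ 2 / (2 * v)) * Real.exp (-(t ^ 2 / v))) := by
        rw [hC, hainv, hat]; ring
    _ ≤ 1 * Real.exp (-t ^ 2 / (2 * v)) := by
        rw [hexp]
        exact mul_le_mul_of_nonneg_right hco (Real.exp_nonneg _)
    _ = _ := one_mul _

lemma gauss_tail_Ici (v : ℝ≥0) (hv : 0 < (v : ℝ)) (t : ℝ) (ht : Real.sqrt v ≤ t) :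
    gaussianReal 0 v (Set.Ici t) ≤ ENNReal.ofReal (Real.exp (-t ^ 2 / (2 * v))) := by
  have hv0 : v ≠ 0 := by intro h; rw [h] at hv; simp at hv
  have hsing : gaussianReal 0 v {t} = 0 :=
    gaussianReal_absolutelyContinuous 0 hv0 (measure_singleton t)
  calc gaussianReal 0 v (Set.Ici t) ≤ gaussianReal 0 v ({t} ∪ Set.Ioi t) := by
        apply measure_mono; intro x hx
        rcases eq_or_lt_of_le (mem_Ici.mp hx) with h | h
        · exact Or.inl h.symm
        · exact Or.inr h
    _ ≤ gaussianReal 0 v {t} + gaussianReal 0 v (Set.Ioi t) := measure_union_le _ _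
    _ ≤ ENNReal.ofReal (Real.exp (-t ^ 2 / (2 * v))) := by
        rw [hsing, zero_add]; exact gauss_tail_Ioi v hv t ht

lemma gauss_tail_Iic (v : ℝ≥0) (hv : 0 < (v : ℝ)) (t : ℝ) (ht : Real.sqrt v ≤ t) :
    gaussianReal 0 v (Set.Iic (-t)) ≤ ENNReal.ofReal (Real.exp (-t ^ 2 / (2 * v))) := by
  have hmap := gaussianReal_map_const_mul (μ := 0) (v := v) (-1)
  have hvv : (NNReal.mk ((-1 : ℝ) ^ 2) (sq_nonneg _)) = 1 := by
    ext; norm_num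
  rw [mul_zero, hvv, one_mul] at hmap
  have hpre : ((-1 : ℝ) * ·) ⁻¹' (Set.Iic (-t)) = Set.Ici t := by
    ext x; simp [neg_le_neg_iff]
  calc gaussianReal 0 v (Set.Iic (-t))
      = (gaussianReal 0 v).map ((-1 : ℝ) * ·) (Set.Iic (-t)) := by rw [hmap]
    _ = gaussianReal 0 v (((-1 : ℝ) * ·) ⁻¹' (Set.Iic (-t))) :=
        Measure.map_apply (measurable_id.const_mul _) measurableSet_Iic
    _ ≤ ENNReal.ofReal (Real.exp (-t ^ 2 / (2 * v))) := by
        rw [hpre]; exact gauss_tail_Ici v hv t ht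


end Aux

/-- Noisy thresholding in Private Evolution under the multiplicity assumption: if every
true count `c_j` is either `0` or at least `B`, and both `H` and `B − H` dominate the
uniform Gaussian noise bound `σ·√(2·log(2m/τ))`, then with probability at least `1 − τ`,
after adding independent `N(0, σ²)` noise and thresholding at `H`, exactly the bins with
true count at least `B` survive. -/
theorem noisy_threshold_exact
    {Ω : Type*} {mΩ : MeasurableSpace Ω} (P : Measure Ω) [IsProbabilityMeasure P]
    (σ H B : ℝ) (hσ : 0 < σ) (hH : 0 < H) (hB : 0 < B)
    (m : ℕ) (hm : 1 ≤ m) (τ : ℝ) (hτ0 : 0 < τ) (hτ1 : τ < 1)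
    (c : Fin m → ℝ) (hc : ∀ j, c j = 0 ∨ B ≤ c j)
    (ξ : Fin m → Ω → ℝ)
    (hindep : iIndepFun ξ P)
    (hlaw : ∀ j, Measure.map (ξ j) P = gaussianReal 0 ⟨σ ^ 2, sq_nonneg σ⟩)
    (hH' : σ * Real.sqrt (2 * Real.log (2 * m / τ)) ≤ H)
    (hBH : σ * Real.sqrt (2 * Real.log (2 * m / τ)) ≤ B - H) :
    ENNReal.ofReal (1 - τ) ≤ P {ω | ∀ j : Fin m, (H < c j + ξ j ω ↔ B ≤ c j)} := by
  classical
  set v : ℝ≥0 := ⟨σ ^ 2, sq_nonneg σ⟩ with hvdef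
  have hvcoe : (v : ℝ) = σ ^ 2 := rfl
  have hvpos : 0 < (v : ℝ) := by rw [hvcoe]; positivity
  set L : ℝ := Real.log (2 * m / τ) with hLdef
  set t : ℝ := σ * Real.sqrt (2 * L) with htdef
  have hm' : (1 : ℝ) ≤ (m : ℝ) := by exact_mod_cast hm
  have hRpos : (0 : ℝ) < 2 * m / τ := by positivity
  have hR2 : (2 : ℝ) ≤ 2 * m / τ := by
    rw [le_div_iff₀ hτ0]; nlinarith
  have h1L : 1 ≤ 2 * L := by
    have h4 : (1 : ℝ) ≤ Real.log 4 := by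
      rw [Real.le_log_iff_exp_le (by norm_num : (0:ℝ) < 4)]
      exact (Real.exp_one_lt_d9.trans (by norm_num)).le
    have hlog4 : Real.log 4 = 2 * Real.log 2 := by
      rw [show (4:ℝ) = 2 ^ 2 by norm_num, Real.log_pow]; push_cast; ring
    have hle : Real.log 2 ≤ L := Real.log_le_log (by norm_num) hR2
    linarith
  have hLpos : 0 < L := by linarith
  have hsq : Real.sqrt (v : ℝ) = σ := by rw [hvcoe]; exact Real.sqrt_sq hσ.le
  have hsqrt1 : 1 ≤ Real.sqrt (2 * L) := by
    rw [show (1:ℝ) = Real.sqrt 1 by simp]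
    exact Real.sqrt_le_sqrt h1L
  have hσt : Real.sqrt (v : ℝ) ≤ t := by
    rw [hsq, htdef]; nlinarith
  have htpos : 0 < t := by
    rw [htdef]; nlinarith
  have ht2 : t ^ 2 = σ ^ 2 * (2 * L) := by
    rw [htdef, mul_pow, Real.sq_sqrt (by linarith : (0:ℝ) ≤ 2 * L)]
  have hexpL : Real.exp (-t ^ 2 / (2 * (v : ℝ))) = τ / (2 * m) := by
    have harg : -t ^ 2 / (2 * (v : ℝ)) = -L := by
      rw [ht2, hvcoe]
      have hσ2 : σ ^ 2 ≠ 0 := by positivity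
      field_simp
    rw [harg, Real.exp_neg, hLdef, Real.exp_log hRpos, inv_div]
  have hbound : ∀ j, P {ω | ¬ (H < c j + ξ j ω ↔ B ≤ c j)} ≤ ENNReal.ofReal (τ / m) := by
    intro j
    have hmeasj : AEMeasurable (ξ j) P :=
      aemeasurable_of_map_neZero (by rw [hlaw j]; infer_instance)
    have hsub : {ω | ¬ (H < c j + ξ j ω ↔ B ≤ c j)} ⊆ ξ j ⁻¹' (Set.Ici t ∪ Set.Iic (-t)) := by
      intro ω hω
      simp only [Set.mem_setOf_eq] at hω
      rcases hc j with hcj | hcj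
      · have hnB : ¬ B ≤ c j := by rw [hcj]; linarith
        have hHlt : H < c j + ξ j ω := by
          by_contra hcon
          exact hω ⟨fun h => absurd h hcon, fun h => absurd h hnB⟩
        left
        simp only [Set.mem_Ici]
        rw [hcj, zero_add] at hHlt
        linarith [hH']
      · have hnot : ¬ H < c j + ξ j ω := by
          intro hcon
          exact hω ⟨fun _ => hcj, fun _ => hcon⟩
        right
        simp only [Set.mem_Iic]
        push_neg at hnot
        linarith [hBH]
    calc P {ω | ¬ (H < c j + ξ j ω ↔ B ≤ c j)}
        ≤ P (ξ j ⁻¹' (Set.Ici t ∪ Set.Iic (-t))) := measure_mono hsub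
      _ = (Measure.map (ξ j) P) (Set.Ici t ∪ Set.Iic (-t)) :=
          (Measure.map_apply_of_aemeasurable hmeasj
            (measurableSet_Ici.union measurableSet_Iic)).symm
      _ = gaussianReal 0 v (Set.Ici t ∪ Set.Iic (-t)) := by rw [hlaw j]
      _ ≤ gaussianReal 0 v (Set.Ici t) + gaussianReal 0 v (Set.Iic (-t)) :=
          measure_union_le _ _
      _ ≤ ENNReal.ofReal (Real.exp (-t ^ 2 / (2 * v))) +
          ENNReal.ofReal (Real.exp (-t ^ 2 / (2 * v))) :=
          add_le_add (gauss_tail_Ici v hvpos t hσt) (gauss_tail_Iic v hvpos t hσt)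
      _ = ENNReal.ofReal (τ / m) := by
          rw [hexpL, ← ENNReal.ofReal_add (by positivity) (by positivity)]
          congr 1
          have hm0 : (m : ℝ) ≠ 0 := by linarith
          field_simp
          ring
  set good : Set Ω := {ω | ∀ j : Fin m, (H < c j + ξ j ω ↔ B ≤ c j)} with hgood
  have hcompl : goodᶜ = ⋃ j, {ω | ¬ (H < c j + ξ j ω ↔ B ≤ c j)} := by
    ext ω
    simp [hgood, not_forall]
  have hunion : P goodᶜ ≤ ENNReal.ofReal τ := by
    rw [hcompl]
    refine (measure_iUnion_le _).trans ?_
    calc ∑' j : Fin m, P {ω | ¬ (H < c j + ξ j ω ↔ B ≤ c j)}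
        ≤ ∑' _ : Fin m, ENNReal.ofReal (τ / m) := ENNReal.tsum_le_tsum fun j => hbound j
      _ = (m : ℝ≥0∞) * ENNReal.ofReal (τ / m) := by
          rw [tsum_fintype]
          simp [Finset.sum_const, nsmul_eq_mul]
      _ = ENNReal.ofReal τ := by
          rw [show ((m : ℕ) : ℝ≥0∞) = ENNReal.ofReal m from (ENNReal.ofReal_natCast m).symm,
            ← ENNReal.ofReal_mul (by positivity)]
          congr 1
          have hm0 : (m : ℝ) ≠ 0 := by linarith
          field_simp
  have hsplit : (1 : ℝ≥0∞) ≤ P good + P goodᶜ := by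
    calc (1 : ℝ≥0∞) = P Set.univ := (measure_univ).symm
      _ = P (good ∪ goodᶜ) := by rw [Set.union_compl_self]
      _ ≤ P good + P goodᶜ := measure_union_le _ _
  have h2 : (1 : ℝ≥0∞) ≤ P good + ENNReal.ofReal τ :=
    hsplit.trans (add_le_add_right hunion _)
  have h3 : (1 : ℝ≥0∞) - ENNReal.ofReal τ ≤ P good := tsub_le_iff_right.mpr h2
  refine le_trans ?_ h3
  rw [← ENNReal.ofReal_one, ← ENNReal.ofReal_sub _ hτ0.le]
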